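/- If u is a bispecial f-smooth word over {a,b} whose canonical run-length factorization has at least two blocks (u is 'long'), then the first and last exponents of u both equal a; moreover u = P_{f,u₁}(D_f(u)) and D_f(u) is also bispecial with the same multiplicity m(D_f(u)) = m(u). -/

import Mathlib

namespace SmoothWords

/-- Complement of a letter over the alphabet `{a, b}`. -/
def flip (a b c : ℕ) : ℕ := if c = a then b else a

/-- Run-length encoding of a finite word: list of (letter, exponent) pairs. -/
def runs : List ℕ → List (ℕ × ℕ)
  | [] => []
  | c :: t =>
    match runs t with
    | [] => [(c, 1)]
    | (d, k) :: r => if c = d then (c, k + 1) :: r else (c, 1) :: (d, k) :: r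

/-- The exponents of the canonical run-length factorization. -/
def exps (u : List ℕ) : List ℕ := (runs u).map Prod.snd

/-- Boundary cut used by the finite derivatives. -/
def cut (a b p : ℕ) : List ℕ := if p ≤ a then [] else [b]

/-- The finite derivative `D_f`. -/
def Df (a b : ℕ) (u : List ℕ) : List ℕ :=
  match exps u with
  | [] => []
  | [p] => cut a b p
  | p :: q :: rest =>
      cut a b p ++ (q :: rest).dropLast ++ cut a b ((q :: rest).getLast (List.cons_ne_nil _ _))

/-- `u` is f-derivable: letters in `{a,b}`, inner run exponents in `{a,b}`,
boundary run exponents in `[1, b]`. -/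
def Cf1 (a b : ℕ) (u : List ℕ) : Prop :=
  (∀ c ∈ u, c = a ∨ c = b) ∧
  (∀ p ∈ exps u, p ≤ b) ∧
  (∀ p ∈ ((exps u).drop 1).dropLast, p = a ∨ p = b)

/-- `u` is f-smooth: all iterated finite derivatives are f-derivable
(equivalently, some iterate is `ε`). -/
def FSmooth (a b : ℕ) (u : List ℕ) : Prop := ∀ n, Cf1 a b ((Df a b)^[n] u)

/-- The r-derivative `D_r`: keeps all exponents but cuts the last one. -/
def Dr (a b : ℕ) (u : List ℕ) : List ℕ :=
  match exps u with
  | [] => []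
  | p :: rest =>
      (p :: rest).dropLast ++ cut a b ((p :: rest).getLast (List.cons_ne_nil _ _))

/-- `u` is r-derivable. -/
def Cr1 (a b : ℕ) (u : List ℕ) : Prop :=
  (∀ c ∈ u, c = a ∨ c = b) ∧
  (∀ p ∈ exps u, p ≤ b) ∧
  (∀ p ∈ (exps u).dropLast, p = a ∨ p = b)

/-- `u` is r-smooth. -/
def RSmooth (a b : ℕ) (u : List ℕ) : Prop := ∀ n, Cr1 a b ((Dr a b)^[n] u)

/-- `y` is the derivative of the infinite word `x`: `x = x₀^{y₀} x̄₀^{y₁} x₀^{y₂} ⋯`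
with all `y i ∈ {a, b}` (in particular `x` is derivable). -/
def DerivesTo (a b : ℕ) (x y : ℕ → ℕ) : Prop :=
  (∀ i, y i = a ∨ y i = b) ∧
  ∃ S : ℕ → ℕ, S 0 = 0 ∧ (∀ k, S (k + 1) = S k + y k) ∧
    ∀ k i, S k ≤ i → i < S (k + 1) → x i = (flip a b)^[k] (x 0)

/-- An infinite word over `{a,b}` is smooth if it is infinitely derivable. -/
def Smooth (a b : ℕ) (x : ℕ → ℕ) : Prop :=
  (∀ i, x i = a ∨ x i = b) ∧
  ∃ X : ℕ → ℕ → ℕ, X 0 = x ∧ ∀ n, DerivesTo a b (X n) (X (n + 1))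

/-- Auxiliary for the f-primitives: alternate blocks with given exponents,
ending with a block of exponent `a`. -/
def pfAux (a b : ℕ) : ℕ → List ℕ → List ℕ
  | c, [] => List.replicate a c
  | c, p :: t => List.replicate p c ++ pfAux a b (flip a b c) t

/-- The f-primitive `P_{f,c}`. -/
def Pf (a b c : ℕ) (u : List ℕ) : List ℕ :=
  if c = a then List.replicate a a ++ pfAux a b b u
  else (List.replicate a a ++ pfAux a b b u).map (flip a b)

/-- `u` is a bispecial f-smooth word. -/
def Bispecial (a b : ℕ) (u : List ℕ) : Prop :=
  FSmooth a b u ∧ FSmooth a b (a :: u) ∧ FSmooth a b (b :: u) ∧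
    FSmooth a b (u ++ [a]) ∧ FSmooth a b (u ++ [b])

open Classical in
/-- The multiplicity `m(u) = |{aua,aub,bua,bub} ∩ C_f^∞| - 3`. -/
noncomputable def mult (a b : ℕ) (u : List ℕ) : ℤ :=
  (if FSmooth a b (a :: u ++ [a]) then 1 else 0) +
  (if FSmooth a b (a :: u ++ [b]) then 1 else 0) +
  (if FSmooth a b (b :: u ++ [a]) then 1 else 0) +
  (if FSmooth a b (b :: u ++ [b]) then 1 else 0) - 3

/-- The vertex of the tree `T` indexed by the path `s` from the root `ε`
(`false` = child by `P_{f,a}`, `true` = child by `P_{f,b}`). -/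
def node (a b : ℕ) : List Bool → List ℕ
  | [] => []
  | c :: s => Pf a b (if c then b else a) (node a b s)

/-- Total length `f(i) = ∑_{u ∈ T_i} |u|` of generation `i` of `T`. -/
def totalLen (a b i : ℕ) : ℕ :=
  ∑ s : Fin i → Bool, (node a b (List.ofFn s)).length

/-- Generation `i` of the tree `T`, as a finite set of words. -/
def genSet (a b i : ℕ) : Finset (List ℕ) :=
  (Finset.univ : Finset (Fin i → Bool)).image fun s => node a b (List.ofFn s)

/-- `b_i(n) = |T_i ∩ A^n|`. -/
def bfun (a b i n : ℕ) : ℕ := ((genSet a b i).filter fun u => u.length = n).card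

/-- `s_i(n) = ∑_{m<n} b_i(m)`. -/
def sfun (a b i n : ℕ) : ℕ := ∑ m ∈ Finset.range n, bfun a b i m

/-- `p_i(n) = ∑_{m<n} s_i(m)`. -/
def pfun (a b i n : ℕ) : ℕ := ∑ m ∈ Finset.range n, sfun a b i m

/-- `p(n) = ∑_i p_i(n)`. -/
noncomputable def pTot (a b n : ℕ) : ℝ := ∑' i : ℕ, (pfun a b i n : ℝ)

/-- `l_i`, the minimal length of a word of generation `i` of `T`. -/
noncomputable def li (a b i : ℕ) : ℕ :=
  sInf {m | ∃ s : Fin i → Bool, (node a b (List.ofFn s)).length = m}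

/-- `u` is a factor of the infinite word `x`. -/
def FactorOf (u : List ℕ) (x : ℕ → ℕ) : Prop :=
  ∃ i, u = (List.range u.length).map fun j => x (i + j)

/-! ### Auxiliary machinery -/

/-- Decode a word from its first run letter and exponent list. -/
def dec (a b : ℕ) : ℕ → List ℕ → List ℕ
  | _, [] => []
  | c, p :: t => List.replicate p c ++ dec a b (flip a b c) t

lemma flip_mem (a b c : ℕ) : flip a b c = a ∨ flip a b c = b := by
  unfold flip; split
  · exact Or.inr rfl
  · exact Or.inl rfl

lemma flip_a (a b : ℕ) : flip a b a = b := by simp [flip]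

lemma flip_b (a b : ℕ) (hne : a ≠ b) : flip a b b = a := by
  simp [flip, Ne.symm hne]

lemma flip_flip (a b : ℕ) (hne : a ≠ b) {c : ℕ} (hc : c = a ∨ c = b) :
    flip a b (flip a b c) = c := by
  rcases hc with h | h
  · rw [h, flip_a, flip_b a b hne]
  · rw [h, flip_b a b hne, flip_a]

lemma flip_ne (a b : ℕ) (hne : a ≠ b) {c : ℕ} (hc : c = a ∨ c = b) : flip a b c ≠ c := by
  rcases hc with h | h
  · rw [h, flip_a]; exact Ne.symm hne
  · rw [h, flip_b a b hne]; exact hne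

lemma eq_or_eq_flip (a b : ℕ) (hne : a ≠ b) {x c : ℕ} (hx : x = a ∨ x = b)
    (hc : c = a ∨ c = b) : x = c ∨ x = flip a b c := by
  rcases hx with h | h <;> rcases hc with h' | h' <;> rw [h, h']
  · exact Or.inl rfl
  · rw [flip_b a b hne]; exact Or.inr rfl
  · rw [flip_a]; exact Or.inr rfl
  · exact Or.inl rfl

lemma dec_append (a b : ℕ) (s : List ℕ) : ∀ (c : ℕ) (t : List ℕ),
    dec a b c (s ++ t) = dec a b c s ++ dec a b ((flip a b)^[s.length] c) t := by
  induction s with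
  | nil => intro c t; simp [dec]
  | cons p s ih =>
    intro c t
    show List.replicate p c ++ dec a b (flip a b c) (s ++ t) =
      List.replicate p c ++ dec a b (flip a b c) s ++ dec a b ((flip a b)^[s.length + 1] c) t
    rw [ih, Function.iterate_succ_apply, List.append_assoc]

lemma dec_map_flip (a b : ℕ) (l : List ℕ) :
    ∀ c, (dec a b c l).map (flip a b) = dec a b (flip a b c) l := by
  induction l with
  | nil => intro c; simp [dec]
  | cons p t ih => intro c; simp [dec, ih]

lemma runs_cons_head (x : ℕ) (t : List ℕ) : ∃ k r, runs (x :: t) = (x, k) :: r ∧ 1 ≤ k := by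
  cases h : runs t with
  | nil => exact ⟨1, [], by simp [runs, h], le_refl 1⟩
  | cons dk r =>
    obtain ⟨d, k⟩ := dk
    by_cases hxd : x = d
    · subst hxd; exact ⟨k + 1, r, by simp [runs, h], by omega⟩
    · exact ⟨1, (d, k) :: r, by simp [runs, h, hxd], le_refl 1⟩

lemma runs_cons_eq (x : ℕ) (t : List ℕ) :
    runs (x :: t) = match runs t with
      | [] => [(x, 1)]
      | (d, k) :: r => if x = d then (x, k + 1) :: r else (x, 1) :: (d, k) :: r := rfl

lemma runs_ne_nil (x : ℕ) (t : List ℕ) : runs (x :: t) ≠ [] := by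
  obtain ⟨k, r, h, -⟩ := runs_cons_head x t; simp [h]

lemma headI_runs {u : List ℕ} {d k : ℕ} {r : List (ℕ × ℕ)}
    (h : runs u = (d, k) :: r) : u.headI = d := by
  cases u with
  | nil => simp [runs] at h
  | cons x t =>
    obtain ⟨k', r', h', -⟩ := runs_cons_head x t
    rw [h'] at h
    simp only [List.cons.injEq, Prod.mk.injEq] at h
    simp [h.1.1]

lemma runs_replicate_append {c : ℕ} {v : List ℕ} {p : ℕ} (hp : 1 ≤ p)
    (hv : v = [] ∨ v.headI ≠ c) : runs (List.replicate p c ++ v) = (c, p) :: runs v := by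
  induction p with
  | zero => omega
  | succ p ih =>
    by_cases hp1 : 1 ≤ p
    · have ih' := ih hp1
      rw [List.replicate_succ, List.cons_append]
      simp [runs, ih']
    · have hp0 : p = 0 := by omega
      subst hp0
      rcases hv with rfl | hv
      · simp [runs]
      · cases v with
        | nil => simp [runs]
        | cons y s =>
          obtain ⟨k, r, h, -⟩ := runs_cons_head y s
          have hcy : c ≠ y := Ne.symm hv
          show runs (c :: y :: s) = (c, 1) :: runs (y :: s)
          rw [runs_cons_eq c (y :: s), h]
          simp [hcy]

lemma dec_headI (a b c p : ℕ) (t : List ℕ) (hp : 1 ≤ p) :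
    (dec a b c (p :: t)).headI = c := by
  show (List.replicate p c ++ _).headI = c
  cases p with
  | zero => omega
  | succ p => simp [List.replicate_succ]

lemma exps_dec (a b : ℕ) (hne : a ≠ b) :
    ∀ (l : List ℕ) (c : ℕ), (c = a ∨ c = b) → (∀ p ∈ l, 1 ≤ p) →
      exps (dec a b c l) = l := by
  intro l
  induction l with
  | nil => intro c _ _; simp [dec, exps, runs]
  | cons p t ih =>
    intro c hc hpos
    have hp : 1 ≤ p := hpos p (by simp)
    have hside : dec a b (flip a b c) t = [] ∨ (dec a b (flip a b c) t).headI ≠ c := by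
      cases t with
      | nil => exact Or.inl rfl
      | cons q t' =>
        right
        rw [dec_headI a b _ q t' (hpos q (by simp))]
        exact flip_ne a b hne hc
    show exps (List.replicate p c ++ dec a b (flip a b c) t) = p :: t
    rw [exps, runs_replicate_append hp hside]
    simp only [List.map_cons]
    rw [← exps, ih (flip a b c) (flip_mem a b c) (fun q hq => hpos q (by simp [hq]))]

lemma runs_pos : ∀ (u : List ℕ), ∀ pr ∈ runs u, 1 ≤ pr.2 := by
  intro u
  induction u with
  | nil => intro pr hpr; simp [runs] at hpr
  | cons x t ih =>
    intro pr hpr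
    cases h : runs t with
    | nil =>
      simp [runs, h] at hpr
      subst hpr; simp
    | cons dk r =>
      obtain ⟨d, k⟩ := dk
      by_cases hxd : x = d
      · subst hxd
        simp only [runs, h, if_pos rfl] at hpr
        rcases List.mem_cons.mp hpr with rfl | hpr
        · simp
        · exact ih pr (by rw [h]; exact List.mem_cons_of_mem _ hpr)
      · simp only [runs, h, if_neg hxd] at hpr
        rcases List.mem_cons.mp hpr with rfl | hpr
        · simp
        · exact ih pr (by rw [h]; exact hpr)

lemma exps_pos (u : List ℕ) : ∀ p ∈ exps u, 1 ≤ p := by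
  intro p hp
  rw [exps] at hp
  obtain ⟨pr, hpr, rfl⟩ := List.mem_map.mp hp
  exact runs_pos u pr hpr

lemma eq_dec (a b : ℕ) (hne : a ≠ b) :
    ∀ (u : List ℕ), (∀ e ∈ u, e = a ∨ e = b) → u = dec a b u.headI (exps u) := by
  intro u
  induction u with
  | nil => intro _; simp [dec, exps, runs]
  | cons x t ih =>
    intro hmem
    have hih := ih (fun e he => hmem e (List.mem_cons_of_mem _ he))
    cases ht : runs t with
    | nil =>
      have ht0 : t = [] := by
        cases t with
        | nil => rfl
        | cons y s => exact absurd ht (runs_ne_nil y s)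
      subst ht0
      simp [exps, runs, dec]
    | cons dk r =>
      obtain ⟨d, k⟩ := dk
      have htne : t ≠ [] := by rintro rfl; simp [runs] at ht
      have hd : t.headI = d := headI_runs ht
      have ht' : exps t = k :: r.map Prod.snd := by simp [exps, ht]
      by_cases hxd : x = d
      · subst hxd
        have hexps : exps (x :: t) = (k + 1) :: r.map Prod.snd := by
          simp [exps, runs, ht]
        rw [hexps]
        show x :: t = dec a b (x :: t).headI ((k + 1) :: r.map Prod.snd)
        show x :: t = List.replicate (k + 1) x ++ dec a b (flip a b x) (r.map Prod.snd)
        rw [List.replicate_succ, List.cons_append]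
        congr 1
        rw [hih, hd, ht']
        simp [dec]
      · have hexps : exps (x :: t) = 1 :: k :: r.map Prod.snd := by
          simp [exps, runs, ht, hxd]
        rw [hexps]
        show x :: t = List.replicate 1 x ++ dec a b (flip a b x) (k :: r.map Prod.snd)
        have hdm : d = a ∨ d = b := by
          cases t with
          | nil => exact absurd rfl htne
          | cons y s =>
            have hy : y = d := hd
            exact hy ▸ hmem y (List.mem_cons_of_mem _ (by simp))
        have hxm : x = a ∨ x = b := hmem x (by simp)
        have hflip : flip a b x = d := by
          rcases hxm with h | h <;> rcases hdm with h' | h'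
          · exact absurd (h.trans h'.symm) hxd
          · rw [h, h', flip_a]
          · rw [h, h']; exact flip_b a b hne
          · exact absurd (h.trans h'.symm) hxd
        rw [hflip, ← ht', ← hd, ← hih]
        rfl

lemma getLast_snoc (l : List ℕ) (q : ℕ) (h : l ++ [q] ≠ []) : (l ++ [q]).getLast h = q :=
  by simp

lemma Df_concat (a b : ℕ) {w : List ℕ} {p q : ℕ} {m : List ℕ}
    (h : exps w = p :: (m ++ [q])) :
    Df a b w = cut a b p ++ m ++ cut a b q := by
  cases m with
  | nil =>
    unfold Df
    rw [h]
    rfl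
  | cons m0 m' =>
    unfold Df
    rw [h]
    show cut a b p ++ (m0 :: (m' ++ [q])).dropLast ++
      cut a b ((m0 :: (m' ++ [q])).getLast (List.cons_ne_nil _ _)) = _
    have h1 : (m0 :: (m' ++ [q])).dropLast = m0 :: m' := by
      rw [← List.cons_append]; exact List.dropLast_concat
    have h2 : (m0 :: (m' ++ [q])).getLast (List.cons_ne_nil _ _) = q :=
      getLast_snoc (m0 :: m') q _
    rw [h1, h2]

lemma fsmooth_iff (a b : ℕ) (w : List ℕ) :
    FSmooth a b w ↔ Cf1 a b w ∧ FSmooth a b (Df a b w) := by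
  constructor
  · intro h
    refine ⟨h 0, fun n => ?_⟩
    have := h (n + 1)
    rwa [Function.iterate_succ_apply] at this
  · rintro ⟨h0, h1⟩ n
    cases n with
    | zero => exact h0
    | succ n => rw [Function.iterate_succ_apply]; exact h1 n

lemma pfAux_eq (a b : ℕ) : ∀ (l : List ℕ) (c : ℕ), pfAux a b c l = dec a b c (l ++ [a]) := by
  intro l
  induction l with
  | nil => intro c; simp [pfAux, dec]
  | cons p t ih => intro c; simp [pfAux, dec, ih]

lemma Pf_eq (a b : ℕ) (hne : a ≠ b) {c : ℕ} (hc : c = a ∨ c = b) (l : List ℕ) :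
    Pf a b c l = dec a b c (a :: (l ++ [a])) := by
  have h1 : List.replicate a a ++ pfAux a b b l = dec a b a (a :: (l ++ [a])) := by
    show _ = List.replicate a a ++ dec a b (flip a b a) (l ++ [a])
    rw [flip_a, pfAux_eq]
  rcases hc with rfl | rfl
  · rw [Pf, if_pos rfl, h1]
  · rw [Pf, if_neg (Ne.symm hne), h1, dec_map_flip, flip_a]

lemma dec_cons_same (a b c p : ℕ) (t : List ℕ) :
    c :: dec a b c (p :: t) = dec a b c ((p + 1) :: t) := by
  show c :: (List.replicate p c ++ _) = List.replicate (p + 1) c ++ _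
  rw [List.replicate_succ, List.cons_append]

lemma dec_cons_flip (a b : ℕ) (hne : a ≠ b) {c : ℕ} (hc : c = a ∨ c = b) (l : List ℕ) :
    flip a b c :: dec a b c l = dec a b (flip a b c) (1 :: l) := by
  show _ = List.replicate 1 (flip a b c) ++ dec a b (flip a b (flip a b c)) l
  rw [flip_flip a b hne hc]
  rfl

lemma dec_snoc (a b c q : ℕ) (s : List ℕ) :
    dec a b c (s ++ [q]) = dec a b c s ++ List.replicate q ((flip a b)^[s.length] c) := by
  rw [dec_append]
  simp [dec]

lemma dec_snoc_same (a b c : ℕ) (s : List ℕ) (q : ℕ) :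
    dec a b c (s ++ [q]) ++ [(flip a b)^[s.length] c] = dec a b c (s ++ [q + 1]) := by
  rw [dec_snoc, dec_snoc, List.append_assoc]
  congr 1
  rw [← List.replicate_succ']

lemma dec_snoc_flip (a b c : ℕ) (s : List ℕ) (q : ℕ) :
    dec a b c (s ++ [q]) ++ [flip a b ((flip a b)^[s.length] c)] = dec a b c (s ++ [q, 1]) := by
  have h : s ++ [q, 1] = (s ++ [q]) ++ [1] := by simp
  rw [h, dec_snoc a b c 1 (s ++ [q])]
  simp [Function.iterate_succ_apply']

set_option maxHeartbeats 1000000 in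
theorem stmt6 (a b : ℕ) (ha : 1 ≤ a) (hab : a < b) (u : List ℕ)
    (hbs : Bispecial a b u) (hlong : 2 ≤ (runs u).length) :
    (exps u).head? = some a ∧ (exps u).getLast? = some a ∧
    u = Pf a b u.headI (Df a b u) ∧
    Bispecial a b (Df a b u) ∧ mult a b (Df a b u) = mult a b u := by
  have hne : a ≠ b := Nat.ne_of_lt hab
  obtain ⟨hsu, hsau, hsbu, hsua, hsub⟩ := hbs
  have Cf1of : ∀ w, FSmooth a b w → Cf1 a b w := by
    intro w h
    have h0 := h 0
    rwa [Function.iterate_zero_apply] at h0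
  obtain ⟨hlet, hle, hinner⟩ := Cf1of u hsu
  have hu_ne : u ≠ [] := by
    rintro rfl; simp [runs] at hlong
  obtain ⟨c, hc, hcu⟩ : ∃ c, (c = a ∨ c = b) ∧ u.headI = c := by
    refine ⟨u.headI, ?_, rfl⟩
    cases u with
    | nil => exact absurd rfl hu_ne
    | cons x t => exact hlet x (by simp)
  obtain ⟨p, m, q, hexps0⟩ : ∃ p m q, exps u = p :: (m ++ [q]) := by
    have hlen : 2 ≤ (exps u).length := by rw [exps, List.length_map]; exact hlong
    cases hE : exps u with
    | nil => rw [hE] at hlen; simp at hlen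
    | cons p r =>
      rcases List.eq_nil_or_concat r with rfl | ⟨mm, qq, rfl⟩
      · rw [hE] at hlen; simp at hlen
      · exact ⟨p, mm, qq, by simpa using hE⟩
  have smooth_cons : ∀ x, x = a ∨ x = b → FSmooth a b (x :: u) := by
    rintro x (rfl | rfl)
    exacts [hsau, hsbu]
  have smooth_snoc : ∀ y, y = a ∨ y = b → FSmooth a b (u ++ [y]) := by
    rintro y (rfl | rfl)
    exacts [hsua, hsub]
  have hpos0 : ∀ r ∈ p :: (m ++ [q]), 1 ≤ r := by rw [← hexps0]; exact exps_pos u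
  have hppos : 1 ≤ p := hpos0 p (by simp)
  have hqpos : 1 ≤ q := hpos0 q (by simp)
  have hmpos : ∀ r ∈ m, 1 ≤ r := fun r hr => hpos0 r (by simp [hr])
  have hdecu : u = dec a b c (p :: (m ++ [q])) := by
    have h := eq_dec a b hne u hlet
    rwa [hcu, hexps0] at h
  have hmle : ∀ r ∈ m, r ≤ b := fun r hr => hle r (by rw [hexps0]; simp [hr])
  have hmab : ∀ r ∈ m, r = a ∨ r = b := by
    intro r hr
    refine hinner r ?_
    rw [hexps0]
    show r ∈ (m ++ [q]).dropLast
    rw [List.dropLast_concat]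
    exact hr
  obtain ⟨d, hd, hdDef⟩ : ∃ d, (d = a ∨ d = b) ∧ (flip a b)^[m.length + 1] c = d := by
    refine ⟨_, ?_, rfl⟩
    rw [Function.iterate_succ_apply']
    exact flip_mem a b _
  have Ecu : c :: u = dec a b c ((p + 1) :: (m ++ [q])) := by
    rw [hdecu, dec_cons_same]
  have Ec'u : flip a b c :: u = dec a b (flip a b c) (1 :: (p :: (m ++ [q]))) := by
    rw [hdecu]
    exact dec_cons_flip a b hne hc _
  have hdDef' : (flip a b)^[(p :: m).length] c = d := by
    rw [List.length_cons]; exact hdDef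
  have Eud : u ++ [d] = dec a b c ((p :: m) ++ [q + 1]) := by
    rw [hdecu, show p :: (m ++ [q]) = (p :: m) ++ [q] from rfl, ← hdDef']
    exact dec_snoc_same a b c (p :: m) q
  have Eud' : u ++ [flip a b d] = dec a b c ((p :: m) ++ [q, 1]) := by
    rw [hdecu, show p :: (m ++ [q]) = (p :: m) ++ [q] from rfl, ← hdDef']
    exact dec_snoc_flip a b c (p :: m) q
  have hexps_cu : exps (c :: u) = (p + 1) :: (m ++ [q]) := by
    rw [Ecu]
    refine exps_dec a b hne _ c hc ?_
    intro r hr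
    rcases List.mem_cons.mp hr with rfl | hr
    · omega
    · exact hpos0 r (List.mem_cons_of_mem _ hr)
  have hexps_c'u : exps (flip a b c :: u) = 1 :: (p :: (m ++ [q])) := by
    rw [Ec'u]
    refine exps_dec a b hne _ _ (flip_mem a b c) ?_
    intro r hr
    rcases List.mem_cons.mp hr with rfl | hr
    · omega
    · exact hpos0 r hr
  have hexps_ud : exps (u ++ [d]) = (p :: m) ++ [q + 1] := by
    rw [Eud]
    refine exps_dec a b hne _ c hc ?_
    intro r hr
    rcases List.mem_append.mp hr with hr | hr
    · rcases List.mem_cons.mp hr with rfl | hr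
      · omega
      · exact hmpos r hr
    · have : r = q + 1 := by simpa using hr
      omega
  have hexps_ud' : exps (u ++ [flip a b d]) = (p :: m) ++ [q, 1] := by
    rw [Eud']
    refine exps_dec a b hne _ c hc ?_
    intro r hr
    rcases List.mem_append.mp hr with hr | hr
    · rcases List.mem_cons.mp hr with rfl | hr
      · omega
      · exact hmpos r hr
    · have : r = q ∨ r = 1 := by simpa using hr
      rcases this with rfl | rfl <;> omega
  have hpb : p + 1 ≤ b := by
    have h0 := Cf1of _ (smooth_cons c hc)
    exact h0.2.1 (p + 1) (by rw [hexps_cu]; simp)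
  have hpa : p = a := by
    have h0 := Cf1of _ (smooth_cons _ (flip_mem a b c))
    have hp' : p = a ∨ p = b := by
      refine h0.2.2 p ?_
      rw [hexps_c'u]
      show p ∈ (p :: (m ++ [q])).dropLast
      rw [show p :: (m ++ [q]) = (p :: m) ++ [q] from rfl, List.dropLast_concat]
      simp
    rcases hp' with h | h
    · exact h
    · omega
  have hqb : q + 1 ≤ b := by
    have h0 := Cf1of _ (smooth_snoc d hd)
    exact h0.2.1 (q + 1) (by rw [hexps_ud]; simp)
  have hqa : q = a := by
    have h0 := Cf1of _ (smooth_snoc _ (flip_mem a b d))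
    have hq' : q = a ∨ q = b := by
      refine h0.2.2 q ?_
      rw [hexps_ud']
      show q ∈ (m ++ [q, 1]).dropLast
      rw [show m ++ [q, 1] = (m ++ [q]) ++ [1] from by simp, List.dropLast_concat]
      simp
    rcases hq' with h | h
    · exact h
    · omega
  rw [hpa, hqa] at hexps0 hdecu hexps_cu hexps_c'u hexps_ud hexps_ud' Eud Eud'
  -- cut values
  have hcut_a : cut a b a = [] := by simp only [cut]; rw [if_pos (le_refl a)]
  have hcut_a1 : cut a b (a + 1) = [b] := by simp only [cut]; rw [if_neg (by omega)]
  have hcut_1 : cut a b 1 = [] := by simp only [cut]; rw [if_pos ha]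
  -- derivatives
  have hDu : Df a b u = m := by
    rw [Df_concat a b hexps0, hcut_a]; simp
  have hD_cu : Df a b (c :: u) = b :: m := by
    rw [Df_concat a b hexps_cu, hcut_a1, hcut_a]; simp
  have hD_c'u : Df a b (flip a b c :: u) = a :: m := by
    rw [Df_concat a b (show exps (flip a b c :: u) = 1 :: ((a :: m) ++ [a]) from hexps_c'u),
      hcut_1, hcut_a]
    simp
  have hD_ud : Df a b (u ++ [d]) = m ++ [b] := by
    rw [Df_concat a b (show exps (u ++ [d]) = a :: (m ++ [a + 1]) from hexps_ud),
      hcut_a, hcut_a1]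
    simp
  have hD_ud' : Df a b (u ++ [flip a b d]) = m ++ [a] := by
    have h2 : exps (u ++ [flip a b d]) = a :: ((m ++ [a]) ++ [1]) := by
      rw [hexps_ud']; simp
    rw [Df_concat a b h2, hcut_a, hcut_1]
    simp
  -- two-sided extensions
  have Ecud : c :: (u ++ [d]) = dec a b c ((a + 1) :: (m ++ [a + 1])) := by
    rw [Eud]
    exact dec_cons_same a b c a (m ++ [a + 1])
  have Ecud' : c :: (u ++ [flip a b d]) = dec a b c ((a + 1) :: (m ++ [a, 1])) := by
    rw [Eud']
    exact dec_cons_same a b c a (m ++ [a, 1])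
  have Ec'ud : flip a b c :: (u ++ [d]) = dec a b (flip a b c) (1 :: ((a :: m) ++ [a + 1])) := by
    rw [Eud]
    exact dec_cons_flip a b hne hc _
  have Ec'ud' : flip a b c :: (u ++ [flip a b d]) =
      dec a b (flip a b c) (1 :: ((a :: m) ++ [a, 1])) := by
    rw [Eud']
    exact dec_cons_flip a b hne hc _
  have exps_of : ∀ (c' : ℕ) (L : List ℕ) (w : List ℕ), (c' = a ∨ c' = b) →
      w = dec a b c' L → (∀ r ∈ L, r = 1 ∨ r = a ∨ r = a + 1 ∨ r ∈ m) →
      exps w = L := by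
    intro c' L w hc' hw hL
    rw [hw]
    refine exps_dec a b hne L c' hc' ?_
    intro r hr
    rcases hL r hr with rfl | rfl | rfl | h
    · omega
    · omega
    · omega
    · exact hmpos r h
  have hexps_cud : exps (c :: (u ++ [d])) = (a + 1) :: (m ++ [a + 1]) :=
    exps_of c _ _ hc Ecud (by intro r hr; simp at hr; tauto)
  have hexps_cud' : exps (c :: (u ++ [flip a b d])) = (a + 1) :: (m ++ [a, 1]) :=
    exps_of c _ _ hc Ecud' (by intro r hr; simp at hr; tauto)
  have hexps_c'ud : exps (flip a b c :: (u ++ [d])) = 1 :: ((a :: m) ++ [a + 1]) :=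
    exps_of _ _ _ (flip_mem a b c) Ec'ud (by intro r hr; simp at hr; tauto)
  have hexps_c'ud' : exps (flip a b c :: (u ++ [flip a b d])) = 1 :: ((a :: m) ++ [a, 1]) :=
    exps_of _ _ _ (flip_mem a b c) Ec'ud' (by intro r hr; simp at hr; tauto)
  have hD_cud : Df a b (c :: (u ++ [d])) = b :: m ++ [b] := by
    rw [Df_concat a b hexps_cud, hcut_a1]; simp
  have hD_cud' : Df a b (c :: (u ++ [flip a b d])) = b :: m ++ [a] := by
    have h2 : exps (c :: (u ++ [flip a b d])) = (a + 1) :: ((m ++ [a]) ++ [1]) := by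
      rw [hexps_cud']; simp
    rw [Df_concat a b h2, hcut_a1, hcut_1]
    simp
  have hD_c'ud : Df a b (flip a b c :: (u ++ [d])) = a :: m ++ [b] := by
    rw [Df_concat a b hexps_c'ud, hcut_1, hcut_a1]; simp
  have hD_c'ud' : Df a b (flip a b c :: (u ++ [flip a b d])) = a :: m ++ [a] := by
    have h2 : exps (flip a b c :: (u ++ [flip a b d])) = 1 :: (((a :: m) ++ [a]) ++ [1]) := by
      rw [hexps_c'ud']; simp
    rw [Df_concat a b h2, hcut_1]
    simp
  -- Cf1 for two-sided extensions
  have hbound : ∀ r, r = 1 ∨ r = a ∨ r = a + 1 ∨ r ∈ m → r ≤ b := by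
    intro r hr
    rcases hr with rfl | rfl | rfl | h
    · omega
    · omega
    · omega
    · exact hmle r h
  have mkCf1 : ∀ (x y : ℕ) (L I : List ℕ), (x = a ∨ x = b) → (y = a ∨ y = b) →
      exps (x :: (u ++ [y])) = L → (L.drop 1).dropLast = I →
      (∀ r ∈ L, r ≤ b) → (∀ r ∈ I, r = a ∨ r = b) → Cf1 a b (x :: (u ++ [y])) := by
    intro x y L I hx hy hL hI hLb hIab
    refine ⟨?_, ?_, ?_⟩
    · intro e he
      rcases List.mem_cons.mp he with rfl | he
      · exact hx
      · rcases List.mem_append.mp he with he | he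
        · exact hlet e he
        · rw [List.mem_singleton.mp he]; exact hy
    · intro r hr; rw [hL] at hr; exact hLb r hr
    · intro r hr; rw [hL, hI] at hr; exact hIab r hr
  have C1 : Cf1 a b (c :: (u ++ [d])) :=
    mkCf1 c d _ m hc hd hexps_cud
      (by show (m ++ [a + 1]).dropLast = m; rw [List.dropLast_concat])
      (by intro r hr; refine hbound r ?_; simp at hr; tauto)
      hmab
  have C2 : Cf1 a b (c :: (u ++ [flip a b d])) :=
    mkCf1 c _ _ (m ++ [a]) hc (flip_mem a b d) hexps_cud'
      (by show (m ++ [a, 1]).dropLast = m ++ [a]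
          rw [show m ++ [a, 1] = (m ++ [a]) ++ [1] from by simp, List.dropLast_concat])
      (by intro r hr; refine hbound r ?_; simp at hr; tauto)
      (by intro r hr
          rcases List.mem_append.mp hr with h | h
          · exact hmab r h
          · rw [List.mem_singleton.mp h]; exact Or.inl rfl)
  have C3 : Cf1 a b (flip a b c :: (u ++ [d])) :=
    mkCf1 _ d _ (a :: m) (flip_mem a b c) hd hexps_c'ud
      (by show ((a :: m) ++ [a + 1]).dropLast = a :: m; rw [List.dropLast_concat])
      (by intro r hr; refine hbound r ?_; simp at hr; tauto)
      (by intro r hr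
          rcases List.mem_cons.mp hr with rfl | h
          · exact Or.inl rfl
          · exact hmab r h)
  have C4 : Cf1 a b (flip a b c :: (u ++ [flip a b d])) :=
    mkCf1 _ _ _ ((a :: m) ++ [a]) (flip_mem a b c) (flip_mem a b d) hexps_c'ud'
      (by show ((a :: m) ++ [a, 1]).dropLast = (a :: m) ++ [a]
          rw [show (a :: m) ++ [a, 1] = ((a :: m) ++ [a]) ++ [1] from by simp,
            List.dropLast_concat])
      (by intro r hr; refine hbound r ?_; simp at hr; tauto)
      (by intro r hr
          rcases List.mem_append.mp hr with h | h
          · rcases List.mem_cons.mp h with rfl | h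
            · exact Or.inl rfl
            · exact hmab r h
          · rw [List.mem_singleton.mp h]; exact Or.inl rfl)
  -- smoothness transfer
  have key : ∀ w, Cf1 a b w → (FSmooth a b w ↔ FSmooth a b (Df a b w)) := by
    intro w hw
    rw [fsmooth_iff a b w]
    exact and_iff_right hw
  have derS : ∀ w, FSmooth a b w → FSmooth a b (Df a b w) :=
    fun w h => ((fsmooth_iff a b w).1 h).2
  have I1 : FSmooth a b (c :: (u ++ [d])) ↔ FSmooth a b (b :: m ++ [b]) := by
    rw [key _ C1, hD_cud]
  have I2 : FSmooth a b (c :: (u ++ [flip a b d])) ↔ FSmooth a b (b :: m ++ [a]) := by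
    rw [key _ C2, hD_cud']
  have I3 : FSmooth a b (flip a b c :: (u ++ [d])) ↔ FSmooth a b (a :: m ++ [b]) := by
    rw [key _ C3, hD_c'ud]
  have I4 : FSmooth a b (flip a b c :: (u ++ [flip a b d])) ↔
      FSmooth a b (a :: m ++ [a]) := by
    rw [key _ C4, hD_c'ud']
  refine ⟨?_, ?_, ?_, ?_, ?_⟩
  · rw [hexps0]; rfl
  · rw [hexps0]
    show ((a :: m) ++ [a]).getLast? = some a
    exact List.getLast?_concat
  · rw [hcu, hDu, Pf_eq a b hne hc m]
    exact hdecu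
  · rw [hDu]
    refine ⟨?_, ?_, ?_, ?_, ?_⟩
    · exact hDu ▸ derS u hsu
    · have h := derS _ (smooth_cons _ (flip_mem a b c))
      rwa [hD_c'u] at h
    · have h := derS _ (smooth_cons c hc)
      rwa [hD_cu] at h
    · have h := derS _ (smooth_snoc _ (flip_mem a b d))
      rwa [hD_ud'] at h
    · have h := derS _ (smooth_snoc d hd)
      rwa [hD_ud] at h
  · rw [hDu]
    simp only [← List.cons_append] at I1 I2 I3 I4
    unfold mult
    rcases hc with hc' | hc' <;> rcases hd with hd' | hd'
    · rw [hc', hd'] at I1 I2 I3 I4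
      rw [flip_a] at I2 I3 I4
      rw [propext I1, propext I2, propext I3, propext I4]
      try ring
    · rw [hc', hd'] at I1 I2 I3 I4
      rw [flip_a] at I3 I4
      rw [flip_b a b hne] at I2 I4
      rw [propext I1, propext I2, propext I3, propext I4]
      try ring
    · rw [hc', hd'] at I1 I2 I3 I4
      rw [flip_b a b hne] at I3 I4
      rw [flip_a] at I2 I4
      rw [propext I1, propext I2, propext I3, propext I4]
      try ring
    · rw [hc', hd'] at I1 I2 I3 I4
      rw [flip_b a b hne] at I2 I3 I4
      rw [propext I1, propext I2, propext I3, propext I4]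
      try ring
end SmoothWords
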